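/- The function under the parameter-shift rule f(θ) = ⟨ψ₀| R_Γ(θ)† O R_Γ(θ) |ψ₀⟩, with Γ² = I, can be written as f(θ) = A + B cos θ + C sin θ for real constants A, B, C depending only on O, Γ, ψ₀. -/

import Mathlib

open Matrix

theorem parameter_shift_trig_form (Γ O : Matrix (Fin 2) (Fin 2) ℂ)
    (hΓherm : Γ.conjTranspose = Γ) (hΓsq : Γ * Γ = 1)
    (hOherm : O.conjTranspose = O) (ψ₀ : Fin 2 → ℂ) :
    let R : ℝ → Matrix (Fin 2) (Fin 2) ℂ := fun θ =>
      (Real.cos (θ / 2) : ℂ) • (1 : Matrix (Fin 2) (Fin 2) ℂ)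
        - (Complex.I * Real.sin (θ / 2)) • Γ
    let f : ℝ → ℝ := fun θ =>
      (star ψ₀ ⬝ᵥ ((R θ).conjTranspose * O * R θ).mulVec ψ₀).re
    ∃ A B C : ℝ, ∀ θ : ℝ, f θ = A + B * Real.cos θ + C * Real.sin θ := by
  intro R f
  set E1 := star ψ₀ ⬝ᵥ O.mulVec ψ₀ with hE1
  set E2 := star ψ₀ ⬝ᵥ (Γ * O * Γ).mulVec ψ₀ with hE2
  set E3 := star ψ₀ ⬝ᵥ (Complex.I • (Γ * O - O * Γ)).mulVec ψ₀ with hE3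
  refine ⟨(E1.re + E2.re) / 2, (E1.re - E2.re) / 2, E3.re / 2, fun θ => ?_⟩
  have hmat : (R θ).conjTranspose * O * R θ
      = ((Real.cos (θ/2) ^ 2 : ℝ) : ℂ) • O
        + ((Real.sin (θ/2) ^ 2 : ℝ) : ℂ) • (Γ * O * Γ)
        + ((Real.cos (θ/2) * Real.sin (θ/2) : ℝ) : ℂ) •
            (Complex.I • (Γ * O - O * Γ)) := by
    have hRH : (R θ).conjTranspose
        = ((Real.cos (θ/2) : ℂ)) • (1 : Matrix (Fin 2) (Fin 2) ℂ)
          + (Complex.I * (Real.sin (θ/2) : ℂ)) • Γ := by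
      simp only [R, conjTranspose_sub, conjTranspose_smul, conjTranspose_one, hΓherm,
        star_mul', Complex.star_def, Complex.conj_I, Complex.conj_ofReal]
      module
    rw [hRH]
    show _ = _
    simp only [R, add_mul, mul_sub, sub_mul, mul_add, smul_mul_assoc,
      mul_smul_comm, one_mul, mul_one, smul_smul, smul_sub]
    match_scalars <;> push_cast <;> ring_nf <;>
      simp [Complex.I_sq, Complex.ext_iff] <;> ring
  have key : f θ = Real.cos (θ/2) ^ 2 * E1.re + Real.sin (θ/2) ^ 2 * E2.re
      + Real.cos (θ/2) * Real.sin (θ/2) * E3.re := by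
    show (star ψ₀ ⬝ᵥ ((R θ).conjTranspose * O * R θ).mulVec ψ₀).re = _
    rw [hmat]
    simp only [Matrix.add_mulVec, Matrix.smul_mulVec, dotProduct_add,
      dotProduct_smul, smul_eq_mul, Complex.add_re, Complex.mul_re,
      Complex.ofReal_re, Complex.ofReal_im]
    have hX : E3.re = -(star ψ₀ ⬝ᵥ (Γ * O - O * Γ) *ᵥ ψ₀).im := by
      rw [hE3]
      simp [Matrix.smul_mulVec, dotProduct_smul, Complex.mul_re]
      ring
    rw [← hE1, ← hE2, hX]
    simp only [Complex.I_re, Complex.I_im]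
    ring
  have h2 : (2:ℝ) * (θ/2) = θ := by ring
  have hc : Real.cos (θ/2) ^ 2 = 1/2 + Real.cos θ / 2 := by
    rw [Real.cos_sq, h2]
  have hs : Real.sin (θ/2) ^ 2 = 1/2 - Real.cos θ / 2 := by
    rw [Real.sin_sq, hc]; ring
  have hsc : Real.cos (θ/2) * Real.sin (θ/2) = Real.sin θ / 2 := by
    have := Real.sin_two_mul (θ/2)
    rw [h2] at this
    linarith
  rw [key, hc, hs, hsc]
  ring
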